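/- Let ⟨A | R⟩ satisfy C(4), let w ∈ A* have clean overlap prefix aXY (a ∈ A*, XYZ a relation word with maximal piece prefix X and middle word Y), and suppose a piece p is a possible prefix of w but not a prefix of w. Then p is a prefix of a·X̄ for some complement X̄Ȳ Z̄ of XYZ with X̄ ≠ X or Ȳ ≠ Y; in particular |p| ≤ |a| + |X̄|. -/

import Mathlib

variable {A : Type*}

/-- One step of rewriting with respect to a relation set `R`. -/
def OneStep (R : Set (List A × List A)) (u v : List A) : Prop :=
  ∃ x y p q, ((p, q) ∈ R ∨ (q, p) ∈ R) ∧ u = x ++ p ++ y ∧ v = x ++ q ++ y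

/-- A (two-sided) congruence on the free monoid `A*`. -/
def IsCong (s : List A → List A → Prop) : Prop :=
  Equivalence s ∧ ∀ u v x y : List A, s u v → s (x ++ u ++ y) (x ++ v ++ y)

/-- The least congruence on `A*` containing `R`; `Cong R u v` means `(u, v) ∈ R#`. -/
def Cong (R : Set (List A × List A)) (u v : List A) : Prop :=
  ∀ s, IsCong s → (∀ p ∈ R, s p.1 p.2) → s u v

/-- The relation words of the presentation `⟨A | R⟩`. -/
def RelWords (R : Set (List A × List A)) : Set (List A) :=
  {w | ∃ v, (w, v) ∈ R ∨ (v, w) ∈ R}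

/-- `p` is a piece of the presentation `⟨A | R⟩`. -/
def IsPiece (R : Set (List A × List A)) (p : List A) : Prop :=
  p = [] ∨
    (∃ u v, u ∈ RelWords R ∧ v ∈ RelWords R ∧ u ≠ v ∧ p <:+: u ∧ p <:+: v) ∨
    (∃ u x x' y y', u ∈ RelWords R ∧ u = x ++ p ++ y ∧ u = x' ++ p ++ y' ∧ x ≠ x')

/-- The presentation satisfies `C(n)`: no relation word is a product of fewer than `n` pieces. -/
def SatisfiesC (R : Set (List A × List A)) (n : ℕ) : Prop :=
  ∀ u ∈ RelWords R, ∀ l : List (List A), (∀ p ∈ l, IsPiece R p) → u = l.flatten →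
    n ≤ l.length

/-- `X` is the maximal piece prefix of `u`. -/
def MaxPiecePrefix (R : Set (List A × List A)) (u X : List A) : Prop :=
  X <+: u ∧ IsPiece R X ∧ ∀ p, p <+: u → IsPiece R p → p.length ≤ X.length

/-- `Z` is the maximal piece suffix of `u`. -/
def MaxPieceSuffix (R : Set (List A × List A)) (u Z : List A) : Prop :=
  Z <:+ u ∧ IsPiece R Z ∧ ∀ p, p <:+ u → IsPiece R p → p.length ≤ Z.length

/-- `u = X ++ Y ++ Z` is the decomposition of the relation word `u` into its maximal
piece prefix `X`, middle word `Y`, and maximal piece suffix `Z`. -/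
def RelDecomp (R : Set (List A × List A)) (u X Y Z : List A) : Prop :=
  u ∈ RelWords R ∧ MaxPiecePrefix R u X ∧ MaxPieceSuffix R u Z ∧ u = X ++ Y ++ Z

/-- `Y` is the middle word of the relation word `u`. -/
def MiddleWord (R : Set (List A × List A)) (u Y : List A) : Prop :=
  ∃ X Z, RelDecomp R u X Y Z

/-- `v` is a complement of the relation word `u`. -/
def ComplRel (R : Set (List A × List A)) (u v : List A) : Prop :=
  Relation.ReflTransGen (fun a b => (a, b) ∈ R ∨ (b, a) ∈ R) u v

/-- `a ++ X ++ Y` is a relation prefix of `w`. -/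
def IsRelPrefix (R : Set (List A × List A)) (w a X Y : List A) : Prop :=
  (∃ u Z, RelDecomp R u X Y Z) ∧ (a ++ X ++ Y) <+: w

/-- `X` and `Y` are the maximal piece prefix and middle word of some relation word. -/
def RelXY (R : Set (List A × List A)) (X Y : List A) : Prop :=
  ∃ u Z, RelDecomp R u X Y Z

/-- `OChain R r X Y` holds when `r ++ X ++ Y` has the form
`X₁Y₁'X₂Y₂' ⋯ X_{n-1}Y_{n-1}' X Y` where each `Yᵢ'` is a proper nonempty prefix of the
middle word `Yᵢ`. -/
inductive OChain (R : Set (List A × List A)) : List A → List A → List A → Prop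
  | base (X Y : List A) : RelXY R X Y → OChain R [] X Y
  | step (X Y Y' r Xl Yl : List A) : RelXY R X Y → Y' <+: Y → Y' ≠ Y → Y' ≠ [] →
      OChain R r Xl Yl → OChain R (X ++ Y' ++ r) Xl Yl

/-- `b ++ r ++ X ++ Y` is an overlap prefix of `w` (with final block `X Y`): it is a chain
as above and no factor of the form `X₀Y₀` begins before the end of `b`. -/
def IsOverlapPrefix (R : Set (List A × List A)) (w b r X Y : List A) : Prop :=
  OChain R r X Y ∧ (b ++ r ++ X ++ Y) <+: w ∧
    ¬ ∃ c X₀ Y₀ : List A, RelXY R X₀ Y₀ ∧ c.length < b.length ∧ (c ++ X₀ ++ Y₀) <+: w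

/-- `a ++ X ++ Y` is a clean overlap prefix of `w`: an overlap prefix such that `w` has no
prefix of the form `a X Y' X₀ Y₀` with `Y'` a proper prefix of `Y`. -/
def IsCleanOverlapPrefix (R : Set (List A × List A)) (w a X Y : List A) : Prop :=
  (∃ b r, a = b ++ r ∧ IsOverlapPrefix R w b r X Y) ∧
    ∀ Y' X₀ Y₀ : List A, Y' <+: Y → Y' ≠ Y → RelXY R X₀ Y₀ →
      ¬ (a ++ X ++ Y' ++ X₀ ++ Y₀) <+: w

namespace SmallOverlap

open List

variable {A : Type*} {R : Set (List A × List A)}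

/- ---------- list utilities ---------- -/

lemma pref_eq {x₁ x₂ t₁ t₂ : List A} (h : x₁ ++ t₁ = x₂ ++ t₂) (hl : x₁.length = x₂.length) :
    x₁ = x₂ := (List.append_inj h hl).1

lemma take_of_eq {v x t : List A} (h : v = x ++ t) : v.take x.length = x := by
  subst h; exact List.take_left

lemma drop_of_eq {v x t : List A} (h : v = x ++ t) : v.drop x.length = t := by
  subst h; exact List.drop_left

lemma prefix_of_prefix_pair {v q f y : List A} (h : q ++ y = f ++ v) (hl : q.length ≤ f.length) :
    q <+: f :=
  List.prefix_of_prefix_length_le ⟨y, h⟩ (List.prefix_append f v) hl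

lemma over_a {v x₁ f₁ y₁ x₂ f₂ y₂ : List A}
    (h1 : v = x₁ ++ f₁ ++ y₁) (h2 : v = x₂ ++ f₂ ++ y₂)
    (hle : x₁.length ≤ x₂.length)
    (hov : x₂.length ≤ x₁.length + f₁.length)
    (hend : x₁.length + f₁.length ≤ x₂.length + f₂.length) :
    ∃ p q, f₁ = p ++ q ∧ p.length = x₂.length - x₁.length ∧ q <+: f₂ := by
  have e1 : v.drop x₂.length = f₂ ++ y₂ := by
    rw [h2, List.append_assoc]; exact List.drop_left
  have e2 : v.drop x₂.length = f₁.drop (x₂.length - x₁.length) ++ y₁ := by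
    rw [h1, List.drop_append, List.drop_append]
    have hx : x₁.drop x₂.length = [] := List.drop_eq_nil_of_le hle
    have hy : y₁.drop (x₂.length - (x₁ ++ f₁).length) = y₁ := by
      have : x₂.length - (x₁ ++ f₁).length = 0 := by simp [List.length_append]; omega
      rw [this, List.drop_zero]
    rw [hx, hy]; simp
  refine ⟨f₁.take (x₂.length - x₁.length), f₁.drop (x₂.length - x₁.length),
    (List.take_append_drop _ f₁).symm, ?_, ?_⟩
  · rw [List.length_take]; omega
  · have heq : f₁.drop (x₂.length - x₁.length) ++ y₁ = f₂ ++ y₂ := e2 ▸ e1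
    exact prefix_of_prefix_pair heq (by rw [List.length_drop]; omega)

lemma over_b {v x₁ f₁ y₁ x₂ f₂ y₂ : List A}
    (h1 : v = x₁ ++ f₁ ++ y₁) (h2 : v = x₂ ++ f₂ ++ y₂)
    (hle : x₁.length ≤ x₂.length)
    (hend : x₂.length + f₂.length ≤ x₁.length + f₁.length) :
    ∃ p r, f₁ = p ++ f₂ ++ r ∧ p.length = x₂.length - x₁.length := by
  have e1 : v.drop x₂.length = f₂ ++ y₂ := by
    rw [h2, List.append_assoc]; exact List.drop_left
  have e2 : v.drop x₂.length = f₁.drop (x₂.length - x₁.length) ++ y₁ := by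
    rw [h1, List.drop_append, List.drop_append]
    have hx : x₁.drop x₂.length = [] := List.drop_eq_nil_of_le hle
    have hy : y₁.drop (x₂.length - (x₁ ++ f₁).length) = y₁ := by
      have : x₂.length - (x₁ ++ f₁).length = 0 := by simp [List.length_append]; omega
      rw [this, List.drop_zero]
    rw [hx, hy]; simp
  have heq : f₂ ++ y₂ = f₁.drop (x₂.length - x₁.length) ++ y₁ := e1 ▸ e2
  have hpref : f₂ <+: f₁.drop (x₂.length - x₁.length) :=
    prefix_of_prefix_pair heq (by rw [List.length_drop]; omega)
  obtain ⟨r, hr⟩ := hpref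
  refine ⟨f₁.take (x₂.length - x₁.length), r, ?_, by rw [List.length_take]; omega⟩
  rw [List.append_assoc, hr, List.take_append_drop]

/- ---------- piece lemmas ---------- -/

lemma piece_of_two {U W xu yu xw yw ω : List A} (hU : U ∈ RelWords R) (hW : W ∈ RelWords R)
    (hu : U = xu ++ ω ++ yu) (hw : W = xw ++ ω ++ yw)
    (hside : U ≠ W ∨ xu.length ≠ xw.length) : IsPiece R ω := by
  by_cases hUW : U = W
  · subst hUW
    have hxl : xu.length ≠ xw.length := by
      rcases hside with h | h
      · exact absurd rfl h
      · exact h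
    have hx : xu ≠ xw := fun h => hxl (by rw [h])
    exact Or.inr (Or.inr ⟨U, xu, xw, yu, yw, hU, hu, hw, hx⟩)
  · exact Or.inr (Or.inl ⟨U, W, hU, hW, hUW, ⟨xu, yu, hu.symm⟩, ⟨xw, yw, hw.symm⟩⟩)

lemma piece_infix {p ω : List A} (hp : IsPiece R p) (hω : ω <:+: p) : IsPiece R ω := by
  rcases hp with h | ⟨u, v, hu, hv, huv, hpu, hpv⟩ | ⟨u, x, x', y, y', hu, h1, h2, hxx⟩
  · subst h; exact Or.inl (List.eq_nil_of_infix_nil hω)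
  · exact Or.inr (Or.inl ⟨u, v, hu, hv, huv, hω.trans hpu, hω.trans hpv⟩)
  · obtain ⟨g, h, hg⟩ := hω
    by_cases hl : x.length = x'.length
    · have e : x ++ (p ++ y) = x' ++ (p ++ y') := by
        have := h1.symm.trans h2
        simpa [List.append_assoc] using this
      exact absurd (pref_eq e hl) hxx
    · refine Or.inr (Or.inr ⟨u, x ++ g, x' ++ g, h ++ y, h ++ y', hu, ?_, ?_, ?_⟩)
      · rw [h1, ← hg]; simp [List.append_assoc]
      · rw [h2, ← hg]; simp [List.append_assoc]
      · intro hcon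
        apply hl
        have := congrArg List.length hcon
        simp [List.length_append] at this
        omega

lemma rd_X_piece {u X Y Z : List A} (h : RelDecomp R u X Y Z) : IsPiece R X := h.2.1.2.1

lemma rd_Z_piece {u X Y Z : List A} (h : RelDecomp R u X Y Z) : IsPiece R Z := h.2.2.1.2.1

lemma rd_prefix_piece_le {u X Y Z q : List A} (h : RelDecomp R u X Y Z)
    (hq : q <+: u) (hp : IsPiece R q) : q.length ≤ X.length := h.2.1.2.2 q hq hp

lemma rd_suffix_piece_le {u X Y Z q : List A} (h : RelDecomp R u X Y Z)
    (hq : q <:+ u) (hp : IsPiece R q) : q.length ≤ Z.length := h.2.2.1.2.2 q hq hp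

lemma rd_eq {u X Y Z : List A} (h : RelDecomp R u X Y Z) : u = X ++ Y ++ Z := h.2.2.2

lemma rd_mem {u X Y Z : List A} (h : RelDecomp R u X Y Z) : u ∈ RelWords R := h.1

lemma word_not_piece (hC : SatisfiesC R 4) {u : List A} (hu : u ∈ RelWords R) :
    ¬ IsPiece R u := by
  intro h
  have := hC u hu [u] (by simpa using h) (by simp)
  simp at this

lemma rd_Y_not_piece (hC : SatisfiesC R 4) {u X Y Z : List A} (h : RelDecomp R u X Y Z) :
    ¬ IsPiece R Y := by
  intro hY
  have := hC u (rd_mem h) [X, Y, Z] ?_ ?_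
  · simp at this
  · intro q hq; simp at hq
    rcases hq with h' | h' | h' <;> subst h'
    · exact rd_X_piece h
    · exact hY
    · exact rd_Z_piece h
  · simpa using rd_eq h

lemma rd_Y_ne_nil (hC : SatisfiesC R 4) {u X Y Z : List A} (h : RelDecomp R u X Y Z) :
    Y ≠ [] := by
  intro hY
  have := hC u (rd_mem h) [X, Z] ?_ ?_
  · simp at this
  · intro q hq; simp at hq
    rcases hq with h' | h' <;> subst h'
    · exact rd_X_piece h
    · exact rd_Z_piece h
  · have := rd_eq h; simp [hY] at this; simpa using this

lemma rd_len {u X Y Z : List A} (h : RelDecomp R u X Y Z) :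
    u.length = X.length + Y.length + Z.length := by
  rw [rd_eq h]; simp [List.length_append]; omega

lemma exists_reldecomp (hC : SatisfiesC R 4) {u : List A} (hu : u ∈ RelWords R) :
    ∃ X Y Z, RelDecomp R u X Y Z := by
  classical
  let n := u.length
  let P : ℕ → Prop := fun k => IsPiece R (u.take k)
  let Q : ℕ → Prop := fun k => IsPiece R (u.drop (n - k))
  haveI : DecidablePred P := fun _ => Classical.propDecidable _
  haveI : DecidablePred Q := fun _ => Classical.propDecidable _
  let nX := Nat.findGreatest P n
  let nZ := Nat.findGreatest Q n
  have hnXle : nX ≤ n := Nat.findGreatest_le n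
  have hnZle : nZ ≤ n := Nat.findGreatest_le n
  have hPX : IsPiece R (u.take nX) :=
    Nat.findGreatest_spec (Nat.zero_le n) (show P 0 from Or.inl List.take_zero)
  have hQZ : IsPiece R (u.drop (n - nZ)) :=
    Nat.findGreatest_spec (Nat.zero_le n) (show Q 0 from Or.inl (by simp [n]))
  have hmaxX : ∀ p, p <+: u → IsPiece R p → p.length ≤ nX := by
    intro p hp hpiece
    have hlen : p.length ≤ n := hp.length_le
    have hpt : p = u.take p.length := List.prefix_iff_eq_take.mp hp
    exact Nat.le_findGreatest hlen (by show IsPiece R (u.take p.length); rw [← hpt]; exact hpiece)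
  have hmaxZ : ∀ p, p <:+ u → IsPiece R p → p.length ≤ nZ := by
    intro p hp hpiece
    have hlen : p.length ≤ n := hp.length_le
    have hpt : p = u.drop (n - p.length) := List.suffix_iff_eq_drop.mp hp
    exact Nat.le_findGreatest hlen (by show IsPiece R (u.drop (n - p.length)); rw [← hpt]; exact hpiece)
  have hsum : nX + nZ ≤ n := by
    by_contra hcon
    push_neg at hcon
    have hS : u.drop nX <:+ u.drop (n - nZ) := by
      have e : u.drop nX = (u.drop (n - nZ)).drop (nX - (n - nZ)) := by
        rw [List.drop_drop]
        congr 1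
        omega
      rw [e]; exact List.drop_suffix _ _
    have hSpiece : IsPiece R (u.drop nX) := piece_infix hQZ hS.isInfix
    have h4 := hC u hu [u.take nX, u.drop nX] ?_ (by simp)
    · simp at h4
    · intro q hq; simp at hq
      rcases hq with h' | h' <;> subst h'
      · exact hPX
      · exact hSpiece
  refine ⟨u.take nX, (u.drop nX).take (n - nX - nZ), u.drop (n - nZ), hu, ?_, ?_, ?_⟩
  · refine ⟨List.take_prefix _ _, hPX, ?_⟩
    intro p hp hpiece
    have := hmaxX p hp hpiece
    rw [List.length_take]
    omega
  · refine ⟨List.drop_suffix _ _, hQZ, ?_⟩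
    intro p hp hpiece
    have := hmaxZ p hp hpiece
    rw [List.length_drop]
    omega
  · rw [List.append_assoc]
    conv_lhs => rw [← List.take_append_drop nX u]
    congr 1
    conv_lhs => rw [← List.take_append_drop (n - nX - nZ) (u.drop nX)]
    congr 1
    rw [List.drop_drop]
    congr 1
    omega

end SmallOverlap
namespace SmallOverlap

open List

variable {A : Type*} {R : Set (List A × List A)}

/-- Overlap bound: a prefix `f₁` of relation word `U` occurring at `x₁` reaches at most
`Xw.length` into an occupant `W.take ζ` occurring at `x₂ ≥ x₁`. -/
lemma M1 (hC : SatisfiesC R 4) {v x₁ f₁ y₁ x₂ y₂ U W Xw Yw Zw : List A} {ζ : ℕ}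
    (hU : U ∈ RelWords R) (hf₁ : f₁ <+: U)
    (h1 : v = x₁ ++ f₁ ++ y₁)
    (hW : RelDecomp R W Xw Yw Zw) (h2 : v = x₂ ++ W.take ζ ++ y₂)
    (hζ : Xw.length < ζ) (hζ' : ζ ≤ W.length)
    (h12 : x₁.length ≤ x₂.length) (hov : x₂.length ≤ x₁.length + f₁.length)
    (hside : U ≠ W ∨ x₁.length < x₂.length) :
    x₁.length + f₁.length ≤ x₂.length + Xw.length := by
  have hlenW : (W.take ζ).length = ζ := by rw [List.length_take]; omega
  have hside' : U = W → x₁.length < x₂.length := by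
    intro h; rcases hside with h' | h'
    · exact absurd h h'
    · exact h'
  by_cases hend : x₁.length + f₁.length ≤ x₂.length + ζ
  · obtain ⟨p, q, hpq, hplen, hq⟩ := over_a h1 h2 h12 hov (by rw [hlenW]; omega)
    have hqW : q <+: W := hq.trans (List.take_prefix _ _)
    obtain ⟨tU, htU⟩ := hf₁
    obtain ⟨tW, htW⟩ := hqW
    have hq_piece : IsPiece R q := by
      apply piece_of_two hU (rd_mem hW) (xu := p) (yu := tU) (xw := []) (yw := tW)
      · rw [← htU, hpq]
      · simpa using htW.symm
      · by_cases hUW : U = W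
        · right
          have hx := hside' hUW
          simp only [List.length_nil]
          omega
        · exact Or.inl hUW
    have hb := rd_prefix_piece_le hW ⟨tW, htW⟩ hq_piece
    have hqlen : p.length + q.length = f₁.length := by
      have := congrArg List.length hpq; simp [List.length_append] at this; omega
    omega
  · push_neg at hend
    obtain ⟨p, r, hpr, hplen⟩ := over_b h1 h2 h12 (by rw [hlenW]; omega)
    obtain ⟨tU, htU⟩ := hf₁
    have hfW_piece : IsPiece R (W.take ζ) := by
      apply piece_of_two hU (rd_mem hW) (xu := p) (yu := r ++ tU) (xw := []) (yw := W.drop ζ)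
      · rw [← htU, hpr]; simp [List.append_assoc]
      · simp
      · by_cases hUW : U = W
        · right
          have hx := hside' hUW
          simp only [List.length_nil]
          omega
        · exact Or.inl hUW
    have := rd_prefix_piece_le hW (List.take_prefix _ _) hfW_piece
    rw [hlenW] at this
    omega

/-- A full relation word `α` at `x₂` cannot overlap from inside the `XY`-part of an
occupant `U.take (|Xu|+|Yu|)` at `x₁ ≤ x₂ ≤ x₁ + |Xu|`. -/
lemma M2 (hC : SatisfiesC R 4) {v x₁ y₁ x₂ y₂ U Xu Yu Zu α Xa Ya Za : List A}
    (hU : RelDecomp R U Xu Yu Zu)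
    (h1 : v = x₁ ++ U.take (Xu.length + Yu.length) ++ y₁)
    (hα : RelDecomp R α Xa Ya Za) (h2 : v = x₂ ++ α ++ y₂)
    (h12 : x₁.length ≤ x₂.length) (hδ : x₂.length ≤ x₁.length + Xu.length)
    (hside : U ≠ α ∨ x₁.length < x₂.length) : False := by
  have hUlen := rd_len hU
  have hYu : 0 < Yu.length := List.length_pos_iff.mpr (rd_Y_ne_nil hC hU)
  have hαlen := rd_len hα
  have hYa : 0 < Ya.length := List.length_pos_iff.mpr (rd_Y_ne_nil hC hα)
  have hside' : U = α → x₁.length < x₂.length := by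
    intro h; rcases hside with h' | h'
    · exact absurd h h'
    · exact h'
  have htk : U.take (Xu.length + Yu.length) = Xu ++ Yu := by
    rw [rd_eq hU]
    exact List.take_left' (by simp)
  rw [htk] at h1
  have hf₁len : (Xu ++ Yu).length = Xu.length + Yu.length := by simp
  by_cases hend : x₁.length + (Xu.length + Yu.length) ≤ x₂.length + α.length
  · obtain ⟨p, q, hpq, hplen, hq⟩ := over_a h1 h2 h12 (by rw [hf₁len]; omega)
      (by rw [hf₁len]; omega)
    obtain ⟨tα, htα⟩ := hq
    have hpqlen : p.length + q.length = Xu.length + Yu.length := by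
      have := congrArg List.length hpq; simp [List.length_append] at this; omega
    have hq_piece : IsPiece R q := by
      apply piece_of_two (rd_mem hU) (rd_mem hα) (xu := p) (yu := Zu) (xw := []) (yw := tα)
      · rw [rd_eq hU, hpq]
      · simpa using htα.symm
      · by_cases hUW : U = α
        · right
          have hx := hside' hUW
          simp only [List.length_nil]
          omega
        · exact Or.inl hUW
    have hYuq : Yu <:+ q := by
      have hqe : q = (Xu ++ Yu).drop p.length := by rw [hpq]; simp
      rw [hqe, List.drop_append]
      have h0 : p.length - Xu.length = 0 := by omega
      rw [h0, List.drop_zero]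
      exact ⟨Xu.drop p.length, rfl⟩
    exact rd_Y_not_piece hC hU (piece_infix hq_piece hYuq.isInfix)
  · push_neg at hend
    obtain ⟨p, r, hpr, hplen⟩ := over_b h1 h2 h12 (by rw [hf₁len]; omega)
    have hα_piece : IsPiece R α := by
      apply piece_of_two (rd_mem hU) (rd_mem hα) (xu := p) (yu := r ++ Zu) (xw := []) (yw := [])
      · rw [rd_eq hU, hpr]; simp [List.append_assoc]
      · simp
      · by_cases hUW : U = α
        · right
          have hx := hside' hUW
          simp only [List.length_nil]
          omega
        · exact Or.inl hUW
    exact word_not_piece hC (rd_mem hα) hα_piece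

/-- A full relation word `α` at `x₁` cannot have an occupant (a prefix of a relation word
longer than its maximal piece prefix) starting at `x₂` with `x₁ ≤ x₂ < x₁ + |Xa| + |Ya|`
(unless it is the same word at the same position). -/
lemma M3 (hC : SatisfiesC R 4) {v x₁ y₁ x₂ y₂ α Xa Ya Za W Xw Yw Zw : List A} {ζ : ℕ}
    (hα : RelDecomp R α Xa Ya Za) (h1 : v = x₁ ++ α ++ y₁)
    (hW : RelDecomp R W Xw Yw Zw) (h2 : v = x₂ ++ W.take ζ ++ y₂)
    (hζ : Xw.length < ζ) (hζ' : ζ ≤ W.length)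
    (h12 : x₁.length ≤ x₂.length)
    (hδ : x₂.length < x₁.length + Xa.length + Ya.length)
    (hside : α ≠ W ∨ x₁.length < x₂.length) : False := by
  have hαlen := rd_len hα
  have hlenW : (W.take ζ).length = ζ := by rw [List.length_take]; omega
  have hside' : α = W → x₁.length < x₂.length := by
    intro h; rcases hside with h' | h'
    · exact absurd h h'
    · exact h'
  by_cases hend : x₁.length + α.length ≤ x₂.length + ζ
  · obtain ⟨p, q, hpq, hplen, hq⟩ := over_a h1 h2 h12 (by omega) (by rw [hlenW]; omega)
    have hqW : q <+: W := hq.trans (List.take_prefix _ _)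
    obtain ⟨tW, htW⟩ := hqW
    have hpqlen : p.length + q.length = α.length := by
      have := congrArg List.length hpq; simp [List.length_append] at this; omega
    have hq_piece : IsPiece R q := by
      apply piece_of_two (rd_mem hα) (rd_mem hW) (xu := p) (yu := []) (xw := []) (yw := tW)
      · rw [hpq]; simp
      · simpa using htW.symm
      · by_cases hUW : α = W
        · right
          have hx := hside' hUW
          simp only [List.length_nil]
          omega
        · exact Or.inl hUW
    have hqsuf : q <:+ α := ⟨p, hpq.symm⟩
    have := rd_suffix_piece_le hα hqsuf hq_piece
    omega
  · push_neg at hend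
    obtain ⟨p, r, hpr, hplen⟩ := over_b h1 h2 h12 (by rw [hlenW]; omega)
    have hfW_piece : IsPiece R (W.take ζ) := by
      apply piece_of_two (rd_mem hα) (rd_mem hW) (xu := p) (yu := r) (xw := []) (yw := W.drop ζ)
      · rw [hpr]
      · simp
      · by_cases hUW : α = W
        · right
          have hx := hside' hUW
          simp only [List.length_nil]
          omega
        · exact Or.inl hUW
    have := rd_prefix_piece_le hW (List.take_prefix _ _) hfW_piece
    rw [hlenW] at this
    omega

end SmallOverlap
namespace SmallOverlap

open List

variable {A : Type*} {R : Set (List A × List A)}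

lemma rd_take {u X Y Z : List A} (h : RelDecomp R u X Y Z) :
    u.take (X.length + Y.length) = X ++ Y := by
  rw [rd_eq h]
  exact List.take_left' (by simp)

lemma rd_unique {u X Y Z X' Y' Z' : List A} (h : RelDecomp R u X Y Z)
    (h' : RelDecomp R u X' Y' Z') : X = X' ∧ Y = Y' ∧ Z = Z' := by
  have hX1 : X.length ≤ X'.length := h'.2.1.2.2 X h.2.1.1 h.2.1.2.1
  have hX2 : X'.length ≤ X.length := h.2.1.2.2 X' h'.2.1.1 h'.2.1.2.1
  have hXX : X = X' := by
    have p1 : X <+: u := h.2.1.1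
    have p2 : X' <+: u := h'.2.1.1
    obtain ⟨t1, ht1⟩ := p1
    obtain ⟨t2, ht2⟩ := p2
    exact pref_eq (ht1.trans ht2.symm) (by omega)
  have hZ1 : Z.length ≤ Z'.length := h'.2.2.1.2.2 Z h.2.2.1.1 h.2.2.1.2.1
  have hZ2 : Z'.length ≤ Z.length := h.2.2.1.2.2 Z' h'.2.2.1.1 h'.2.2.1.2.1
  have hZZ : Z = Z' := by
    obtain ⟨t1, ht1⟩ := h.2.2.1.1
    obtain ⟨t2, ht2⟩ := h'.2.2.1.1
    have e := ht1.trans ht2.symm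
    have hlen : t1.length = t2.length := by
      have := congrArg List.length e; simp at this; omega
    exact (List.append_inj e hlen).2
  refine ⟨hXX, ?_, hZZ⟩
  have e1 := rd_eq h
  have e2 := rd_eq h'
  rw [← hXX, ← hZZ] at e2
  have e3 : X ++ Y ++ Z = X ++ Y' ++ Z := e1.symm.trans e2
  rw [List.append_assoc, List.append_assoc] at e3
  have e4 := List.append_cancel_left e3
  exact List.append_cancel_right e4

/-- A truncated block `XᵢYᵢ'` of a chain. -/
structure Blk (R : Set (List A × List A)) : Type _ where
  w : List A
  X : List A
  Y : List A
  Z : List A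
  pf : List A
  dec : RelDecomp R w X Y Z
  hpref : pf <+: Y
  hne : pf ≠ Y
  hnnil : pf ≠ []

/-- The content of a block. -/
def Blk.c (b : Blk R) : List A := b.X ++ b.pf

lemma Blk.c_len (b : Blk R) : b.c.length = b.X.length + b.pf.length := by
  simp [Blk.c]

lemma Blk.pf_lt (b : Blk R) : b.pf.length < b.Y.length :=
  lt_of_le_of_ne b.hpref.length_le (fun h => b.hne (List.IsPrefix.eq_of_length b.hpref h))

lemma Blk.pf_pos (b : Blk R) : 0 < b.pf.length := List.length_pos_iff.mpr b.hnnil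

lemma Blk.c_take (b : Blk R) : b.c = b.w.take b.c.length := by
  obtain ⟨t, ht⟩ := b.hpref
  rw [Blk.c_len, rd_eq b.dec, ← ht]
  have : b.X ++ (b.pf ++ t) ++ b.Z = (b.X ++ b.pf) ++ (t ++ b.Z) := by
    simp [List.append_assoc]
  rw [this, List.take_left' (by simp)]
  rfl

lemma Blk.c_lt (b : Blk R) : b.c.length < b.X.length + b.Y.length := by
  rw [Blk.c_len]
  have := b.pf_lt
  omega

lemma Blk.c_le_w (b : Blk R) : b.c.length ≤ b.w.length := by
  rw [rd_len b.dec, Blk.c_len]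
  have := b.pf_lt
  omega

lemma Blk.c_pos (b : Blk R) : 0 < b.c.length := by
  rw [Blk.c_len]
  have := b.pf_pos
  omega

lemma Blk.c_pref (b : Blk R) : b.c <+: b.w := by
  rw [b.c_take]
  exact List.take_prefix _ _

/-- The currently tracked relation word (first structure at or after `a`). -/
def trackWord (post : List (Blk R)) (fw : List A) : List A :=
  match post with
  | [] => fw
  | c :: _ => c.w

/-- The inductive invariant. -/
inductive Wit (R : Set (List A × List A)) (u₀ a : List A) : List A → Prop where
  | mk : ∀ (v b : List A) (pre post : List (Blk R)) (fw fX fY fZ : List A),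
      RelDecomp R fw fX fY fZ →
      a = b ++ (pre.map Blk.c).flatten →
      (b ++ (pre.map Blk.c).flatten ++ (post.map Blk.c).flatten ++ fX ++ fY) <+: v →
      ComplRel R u₀ (trackWord post fw) →
      (∀ c X₀ Y₀ : List A, RelXY R X₀ Y₀ → (c ++ X₀ ++ Y₀) <+: v → b.length ≤ c.length) →
      Wit R u₀ a v

/-- From presence data, extract the occupant at the head of the corridor. -/
lemma head_occupant {v : List A} {fw fX fY fZ : List A} (hC : SatisfiesC R 4)
    (fdec : RelDecomp R fw fX fY fZ)
    (L : List (Blk R)) (g rest : List A)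
    (hp : v = g ++ (L.map Blk.c).flatten ++ (fX ++ fY) ++ rest) :
    ∃ (W : List A) (ζ : ℕ) (Xw Yw Zw y₂ : List A),
      RelDecomp R W Xw Yw Zw ∧ v = g ++ W.take ζ ++ y₂ ∧ Xw.length < ζ ∧ ζ ≤ W.length := by
  cases L with
  | nil =>
    refine ⟨fw, fX.length + fY.length, fX, fY, fZ, rest, fdec, ?_, ?_, ?_⟩
    · rw [rd_take fdec]
      simpa using hp
    · have := List.length_pos_iff.mpr (rd_Y_ne_nil hC fdec)
      omega
    · rw [rd_len fdec]; omega
  | cons C L' =>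
    refine ⟨C.w, C.c.length, C.X, C.Y, C.Z,
      (L'.map Blk.c).flatten ++ (fX ++ fY) ++ rest, C.dec, ?_, ?_, ?_⟩
    · rw [← Blk.c_take]
      rw [hp]
      simp [List.append_assoc]
    · rw [Blk.c_len]
      have := C.pf_pos
      omega
    · exact C.c_le_w

/-- No full relation word can begin strictly inside the corridor region. -/
lemma corridor_excl (hC : SatisfiesC R 4) {v : List A}
    {fw fX fY fZ : List A} (fdec : RelDecomp R fw fX fY fZ) :
    ∀ (L : List (Blk R)) (g rest : List A),
      v = g ++ (L.map Blk.c).flatten ++ (fX ++ fY) ++ rest →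
      ∀ {x α y Xa Ya Za : List A}, RelDecomp R α Xa Ya Za → v = x ++ α ++ y →
      g.length ≤ x.length → x.length < g.length + ((L.map Blk.c).flatten).length → False := by
  intro L
  induction L with
  | nil => intro g rest hp x α y Xa Ya Za hα hv h1 h2; simp at h2; omega
  | cons C L' ih =>
    intro g rest hp x α y Xa Ya Za hα hv h1 h2
    have hflat : ((C :: L').map Blk.c).flatten = C.c ++ (L'.map Blk.c).flatten := by simp
    rw [hflat] at h2
    simp only [List.length_append] at h2
    have hgc2 : (g ++ C.c).length = g.length + C.c.length := by simp
    have hCw : v = g ++ C.w.take C.c.length ++ ((L'.map Blk.c).flatten ++ (fX ++ fY) ++ rest) := by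
      rw [← Blk.c_take, hp, hflat]
      simp [List.append_assoc]
    have hp' : v = (g ++ C.c) ++ (L'.map Blk.c).flatten ++ (fX ++ fY) ++ rest := by
      rw [hp, hflat]; simp [List.append_assoc]
    have hCc : v = g ++ C.c ++ ((L'.map Blk.c).flatten ++ (fX ++ fY) ++ rest) := by
      rw [hp']; simp [List.append_assoc]
    by_cases hin : x.length < g.length + C.c.length
    · -- rewrite site inside block C
      obtain ⟨W₂, ζ₂, Xw₂, Yw₂, Zw₂, y₂, hd₂, ho₂, hζ₂, hζ₂'⟩ :=
        head_occupant hC fdec L' (g ++ C.c) rest hp'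
      have hXaYa : 0 < Ya.length := List.length_pos_iff.mpr (rd_Y_ne_nil hC hα)
      have hXa_lt : Xa.length < α.length := by rw [rd_len hα]; omega
      have hCcX : C.X.length < C.c.length := by rw [Blk.c_len]; have := C.pf_pos; omega
      by_cases hxg : x.length = g.length
      · by_cases hαC : α = C.w
        · -- α equals the block word: use M3 against the next occupant
          obtain ⟨e1, e2, e3⟩ := rd_unique hα (by rw [hαC]; exact C.dec)
          have hccpos := C.c_pos
          have hclt := C.c_lt
          exact M3 hC hα hv hd₂ ho₂ hζ₂ hζ₂' (by rw [hgc2]; omega)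
            (by rw [hgc2, e1, e2]; omega)
            (Or.inr (by rw [hgc2]; omega))
        · -- distinct words aligned at the same position: double M1
          have hb1 : x.length + α.length ≤ g.length + C.X.length :=
            M1 hC (rd_mem hα) (List.prefix_refl α) hv C.dec hCw hCcX C.c_le_w
              (by omega) (by omega) (Or.inl hαC)
          have hb2 : g.length + C.c.length ≤ x.length + Xa.length := by
            have hv' : v = x ++ α.take α.length ++ y := by rw [List.take_length]; exact hv
            exact M1 hC (rd_mem C.dec) C.c_pref hCc hα hv' hXa_lt le_rfl
              (by omega) (by omega) (Or.inl (fun h => hαC h.symm))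
          have := C.c_pos
          omega
      · -- x strictly inside the block
        have hxg' : g.length < x.length := by omega
        have hb2 : g.length + C.c.length ≤ x.length + Xa.length := by
          have hv' : v = x ++ α.take α.length ++ y := by rw [List.take_length]; exact hv
          exact M1 hC (rd_mem C.dec) C.c_pref hCc hα hv' hXa_lt le_rfl
            (by omega) (by omega) (Or.inr hxg')
        exact M3 hC hα hv hd₂ ho₂ hζ₂ hζ₂' (by rw [hgc2]; omega) (by rw [hgc2]; omega)
          (Or.inr (by rw [hgc2]; omega))
    · -- recurse into the tail of the corridor
      push_neg at hin
      have h2' : x.length < (g ++ C.c).length + ((L'.map Blk.c).flatten).length := by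
        rw [hgc2]
        omega
      exact ih (g ++ C.c) rest hp' hα hv (by rw [hgc2]; omega) h2'

end SmallOverlap
namespace SmallOverlap

open List

variable {A : Type*} {R : Set (List A × List A)}

lemma pref_of_eq {v x t : List A} (h : v = x ++ t) : x <+: v := ⟨t, h.symm⟩

/-- Rebuild the minimality property (no relation prefix occurs before `b`) after a
rewriting step, possibly splitting new chain blocks off the back of the old `b`. -/
lemma minC (hC : SatisfiesC R 4) {v v' x α y β Xb Yb Zb : List A}
    (hv : v = x ++ α ++ y) (hv' : v' = x ++ β ++ y)
    (hβ : RelDecomp R β Xb Yb Zb)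
    {bOld : List A}
    (hmin_old : ∀ c X₀ Y₀ : List A, RelXY R X₀ Y₀ → (c ++ X₀ ++ Y₀) <+: v →
      bOld.length ≤ c.length)
    {pre0 post0 : List (Blk R)} {fw' fX' fY' fZ' : List A}
    (fdec' : RelDecomp R fw' fX' fY' fZ')
    (hpres' : (bOld ++ (pre0.map Blk.c).flatten ++ (post0.map Blk.c).flatten ++ fX' ++ fY') <+: v')
    (hgeom : bOld.length + ((pre0.map Blk.c).flatten).length
        + ((post0.map Blk.c).flatten).length + fX'.length + fY'.length ≤ x.length ∨
      bOld.length + ((pre0.map Blk.c).flatten).length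
        + ((post0.map Blk.c).flatten).length = x.length) :
    ∃ (b₁ : List A) (F₁ : List (Blk R)),
      b₁ ++ (F₁.map Blk.c).flatten = bOld ∧
      (∀ c X₀ Y₀ : List A, RelXY R X₀ Y₀ → (c ++ X₀ ++ Y₀) <+: v' → b₁.length ≤ c.length) := by
  have hβlen := rd_len hβ
  have hYb : 0 < Yb.length := List.length_pos_iff.mpr (rd_Y_ne_nil hC hβ)
  have hbx : bOld.length ≤ x.length := by rcases hgeom with h | h <;> omega
  have hxv' : x <+: v' := pref_of_eq (by rw [hv', List.append_assoc])
  have hxv : x <+: v := pref_of_eq (by rw [hv, List.append_assoc])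
  suffices H : ∀ n (b₀ : List A) (F : List (Blk R)), b₀.length = n →
      b₀ ++ (F.map Blk.c).flatten = bOld →
      ∃ (b₁ : List A) (F₁ : List (Blk R)),
        b₁ ++ (F₁.map Blk.c).flatten = bOld ∧
        (∀ c X₀ Y₀ : List A, RelXY R X₀ Y₀ → (c ++ X₀ ++ Y₀) <+: v' → b₁.length ≤ c.length) by
    exact H bOld.length bOld [] rfl (by simp)
  intro n
  induction n using Nat.strong_induction_on with
  | _ n ih =>
    intro b₀ F hlen hsplit
    by_cases hok : ∀ c X₀ Y₀ : List A, RelXY R X₀ Y₀ → (c ++ X₀ ++ Y₀) <+: v' →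
        b₀.length ≤ c.length
    · exact ⟨b₀, F, hsplit, hok⟩
    push_neg at hok
    obtain ⟨c, X₀, Y₀, hxy, hocc, hlt⟩ := hok
    obtain ⟨u₀, Z₀, hdec₀⟩ := hxy
    obtain ⟨tail₀, htail₀⟩ := hocc
    have htail₀2 : v' = c ++ X₀ ++ Y₀ ++ tail₀ := htail₀.symm
    have htail₀' : v' = c ++ (X₀ ++ Y₀) ++ tail₀ := by
      rw [htail₀2]; simp [List.append_assoc]
    have hb₀Old : b₀.length ≤ bOld.length := by
      have := congrArg List.length hsplit; simp at this; omega
    have hcx : c.length < x.length := by omega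
    by_cases he : c.length + X₀.length + Y₀.length ≤ x.length
    · -- occurrence in the common prefix: contradiction with old minimality
      exfalso
      have hq : (c ++ X₀ ++ Y₀) <+: x :=
        List.prefix_of_prefix_length_le (pref_of_eq htail₀2) hxv'
          (by simp [List.length_append]; omega)
      have := hmin_old c X₀ Y₀ ⟨u₀, Z₀, hdec₀⟩ (hq.trans hxv)
      omega
    push_neg at he
    have hf₁pref : (X₀ ++ Y₀) <+: u₀ := ⟨Z₀, by rw [rd_eq hdec₀, List.append_assoc]⟩
    have hv'β : v' = x ++ β.take β.length ++ y := by rw [List.take_length]; exact hv'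
    have hbound : c.length + (X₀ ++ Y₀).length ≤ x.length + Xb.length :=
      M1 hC (rd_mem hdec₀) hf₁pref htail₀' hβ hv'β (by omega) le_rfl
        (by omega) (by simp [List.length_append]; omega) (Or.inr hcx)
    simp only [List.length_append] at hbound
    by_cases hf : x.length ≤ c.length + X₀.length
    · -- the middle word Y₀ is swallowed by the piece Xb
      exfalso
      have h2' : v' = x ++ Xb ++ (Yb ++ Zb ++ y) := by
        rw [hv', rd_eq hβ]; simp [List.append_assoc]
      have h1' : v' = (c ++ X₀) ++ Y₀ ++ tail₀ := htail₀2
      obtain ⟨p, r, hpr, _⟩ := over_b h2' h1'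
        (by simp [List.length_append]; omega) (by simp [List.length_append]; omega)
      exact rd_Y_not_piece hC hdec₀ (piece_infix (rd_X_piece hβ) ⟨p, r, hpr.symm⟩)
    push_neg at hf
    cases hcor : F ++ pre0 ++ post0 with
    | cons C L'' =>
      exfalso
      have hfl2 : (F.map Blk.c).flatten ++ (pre0.map Blk.c).flatten
          ++ (post0.map Blk.c).flatten = C.c ++ (L''.map Blk.c).flatten := by
        have : ((F ++ pre0 ++ post0).map Blk.c).flatten
            = ((C :: L'').map Blk.c).flatten := by rw [hcor]
        simpa [List.append_assoc] using this
      obtain ⟨t₂, ht₂⟩ := hpres'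
      have hvb : v' = b₀ ++ C.c ++ ((L''.map Blk.c).flatten ++ (fX' ++ (fY' ++ t₂))) := by
        rw [← ht₂, ← hsplit]
        have hfl3 := congrArg (fun l => b₀ ++ (l ++ (fX' ++ (fY' ++ t₂)))) hfl2
        simp only [List.append_assoc] at hfl3 ⊢
        exact hfl3
      have hcorlen : b₀.length + C.c.length ≤ x.length := by
        have h1 := congrArg List.length hsplit
        simp only [List.length_append] at h1
        have h2 := congrArg List.length hfl2
        simp only [List.length_append] at h2
        rcases hgeom with h | h <;> omega
      obtain ⟨p, q, hpq, hplen⟩ := over_b htail₀' hvb (by omega)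
        (by simp [List.length_append]; omega)
      have hu₀eq : u₀ = p ++ C.c ++ (q ++ Z₀) := by
        rw [rd_eq hdec₀, ← List.append_assoc, hpq, List.append_assoc]
      obtain ⟨tc, htc⟩ := C.c_pref
      have hpiece : IsPiece R C.c := by
        apply piece_of_two (rd_mem hdec₀) (rd_mem C.dec) (xu := p) (yu := q ++ Z₀)
          (xw := []) (yw := tc)
        · exact hu₀eq
        · rw [← htc]; simp
        · by_cases hW : u₀ = C.w
          · right; simp only [List.length_nil]; omega
          · exact Or.inl hW
      have hple := rd_prefix_piece_le C.dec C.c_pref hpiece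
      have hpp := C.pf_pos
      have hcl := C.c_len
      omega
    | nil =>
      have hF0 : F = [] := by
        rcases List.append_eq_nil_iff.mp hcor with ⟨h1, _⟩
        exact (List.append_eq_nil_iff.mp h1).1
      have hpre0 : pre0 = [] := by
        rcases List.append_eq_nil_iff.mp hcor with ⟨h1, _⟩
        exact (List.append_eq_nil_iff.mp h1).2
      have hpost0 : post0 = [] := (List.append_eq_nil_iff.mp hcor).2
      have hb₀bOld : b₀ = bOld := by rw [← hsplit, hF0]; simp
      rw [hpre0, hpost0] at hpres' hgeom
      simp only [List.map_nil, List.flatten_nil, List.append_nil, List.length_nil,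
        Nat.add_zero] at hpres' hgeom
      rcases hgeom with hg | hg
      · -- the final occupant is swallowed: contradiction
        exfalso
        obtain ⟨t₂, ht₂⟩ := hpres'
        have hvb : v' = bOld ++ (fX' ++ fY') ++ t₂ := by
          rw [← ht₂]; simp [List.append_assoc]
        obtain ⟨p, q, hpq, hplen⟩ := over_b htail₀' hvb (by omega)
          (by simp [List.length_append]; omega)
        have hu₀eq : u₀ = p ++ (fX' ++ fY') ++ (q ++ Z₀) := by
          rw [rd_eq hdec₀, ← List.append_assoc, hpq, List.append_assoc]
        have hfpref : (fX' ++ fY') <+: fw' := by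
          rw [← rd_take fdec']; exact List.take_prefix _ _
        obtain ⟨tf, htf⟩ := hfpref
        have hpiece : IsPiece R (fX' ++ fY') := by
          apply piece_of_two (rd_mem hdec₀) (rd_mem fdec') (xu := p) (yu := q ++ Z₀)
            (xw := []) (yw := tf)
          · exact hu₀eq
          · rw [← htf]; simp
          · by_cases hW : u₀ = fw'
            · right; simp only [List.length_nil]; rw [hb₀bOld] at hlt; omega
            · exact Or.inl hW
        have hple := rd_prefix_piece_le fdec' ⟨tf, htf⟩ hpiece
        have hYf := List.length_pos_iff.mpr (rd_Y_ne_nil hC fdec')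
        simp only [List.length_append] at hple
        omega
      · -- rebuild: split a new block off the back of `b₀` and recurse
        have hxlen : bOld.length = x.length := hg
        obtain ⟨k, hk⟩ : ∃ k, k = x.length - (c.length + X₀.length) := ⟨_, rfl⟩
        have hkpos : 0 < k := by omega
        have hklt : k < Y₀.length := by omega
        have hv'2 : v' = (c ++ X₀) ++ (Y₀ ++ tail₀) := by
          rw [htail₀2]; simp [List.append_assoc]
        have hxeq : x = c ++ X₀ ++ Y₀.take k := by
          have h1 : x = v'.take x.length := (take_of_eq (by rw [hv', List.append_assoc])).symm
          rw [h1, hv'2, List.take_append]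
          have h2 : (c ++ X₀).take x.length = c ++ X₀ :=
            List.take_of_length_le (by simp [List.length_append]; omega)
          have h3 : (Y₀ ++ tail₀).take (x.length - (c ++ X₀).length) = Y₀.take k := by
            have h4 : x.length - (c ++ X₀).length = k := by
              simp only [List.length_append]; omega
            rw [h4]
            exact List.take_append_of_le_length (by omega)
          rw [h2, h3]
        have hbOldx : bOld = x := by
          have hb1 : bOld <+: bOld ++ fX' ++ fY' :=
            ⟨fX' ++ fY', by simp [List.append_assoc]⟩
          have hbp : bOld <+: v' := hb1.trans hpres'
          obtain ⟨ta, hta⟩ := hbp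
          obtain ⟨tb, htb⟩ := hxv'
          exact pref_eq (hta.trans htb.symm) hxlen
        refine ih c.length (by omega) c
          [⟨u₀, X₀, Y₀, Z₀, Y₀.take k, hdec₀, List.take_prefix _ _, ?_, ?_⟩] rfl ?_
        · intro hEq
          have := congrArg List.length hEq
          rw [List.length_take] at this
          omega
        · intro hEq
          have := congrArg List.length hEq
          rw [List.length_take] at this
          simp only [List.length_nil] at this
          omega
        · simp only [List.map_cons, List.map_nil, List.flatten_cons, List.flatten_nil,
            List.append_nil, Blk.c]
          rw [hbOldx, hxeq]
          simp [List.append_assoc]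

end SmallOverlap
namespace SmallOverlap

open List

variable {A : Type*} {R : Set (List A × List A)}

lemma trackWord_append_single (post : List (Blk R)) (e : Blk R) (f' : List A) :
    trackWord (post ++ [e]) f' = trackWord post e.w := by
  cases post <;> rfl

/-- The key one-step preservation lemma. -/
lemma step (hC : SatisfiesC R 4) {u₀ a v v' : List A}
    (hw : Wit R u₀ a v) (hs : OneStep R v v') : Wit R u₀ a v' := by
  obtain ⟨x, y, α, β, hrel, hv, hv'⟩ := hs
  obtain ⟨b, pre, post, fw, fX, fY, fZ, fdec, ha, hpres, htrk, hmin⟩ := hw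
  have hα : α ∈ RelWords R := by
    rcases hrel with h | h
    · exact ⟨β, Or.inl h⟩
    · exact ⟨β, Or.inr h⟩
  have hβ : β ∈ RelWords R := by
    rcases hrel with h | h
    · exact ⟨α, Or.inr h⟩
    · exact ⟨α, Or.inl h⟩
  obtain ⟨Xa, Ya, Za, hαdec⟩ := exists_reldecomp hC hα
  obtain ⟨Xb, Yb, Zb, hβdec⟩ := exists_reldecomp hC hβ
  have hαlen := rd_len hαdec
  have hβlen := rd_len hβdec
  have hYa : 0 < Ya.length := List.length_pos_iff.mpr (rd_Y_ne_nil hC hαdec)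
  have hYb : 0 < Yb.length := List.length_pos_iff.mpr (rd_Y_ne_nil hC hβdec)
  have hYf : 0 < fY.length := List.length_pos_iff.mpr (rd_Y_ne_nil hC fdec)
  have hfwlen := rd_len fdec
  obtain ⟨rest, hrest⟩ := hpres
  have hvfull : v = b ++ (pre.map Blk.c).flatten ++ (post.map Blk.c).flatten
      ++ fX ++ fY ++ rest := by rw [← hrest]
  have hxv : x <+: v := pref_of_eq (by rw [hv, List.append_assoc])
  have hxv' : x <+: v' := pref_of_eq (by rw [hv', List.append_assoc])
  have hoccα : (x ++ Xa ++ Ya) <+: v :=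
    ⟨Za ++ y, by rw [hv, rd_eq hαdec]; simp [List.append_assoc]⟩
  -- Case A: rewriting before b is impossible
  have hbx : b.length ≤ x.length := hmin x Xa Ya ⟨α, Za, hαdec⟩ hoccα
  have hcorp : v = b ++ ((pre ++ post).map Blk.c).flatten ++ (fX ++ fY) ++ rest := by
    rw [hvfull]; simp [List.append_assoc]
  have hflatlen : (((pre ++ post).map Blk.c).flatten).length
      = ((pre.map Blk.c).flatten).length + ((post.map Blk.c).flatten).length := by
    simp
  -- Case B: rewriting inside the corridor is impossible
  have hcorB : ¬ (x.length < b.length + ((pre.map Blk.c).flatten).length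
      + ((post.map Blk.c).flatten).length) := by
    intro hlt
    exact corridor_excl hC fdec (pre ++ post) b rest hcorp hαdec hv hbx (by omega)
  push_neg at hcorB
  -- the end of the corridor
  have hvg : v = (b ++ (pre.map Blk.c).flatten ++ (post.map Blk.c).flatten)
      ++ (fX ++ fY) ++ rest := by rw [hvfull]; simp [List.append_assoc]
  have hglen : (b ++ (pre.map Blk.c).flatten ++ (post.map Blk.c).flatten).length
      = b.length + ((pre.map Blk.c).flatten).length + ((post.map Blk.c).flatten).length := by
    simp only [List.length_append]
  have hvg2 : v = (b ++ (pre.map Blk.c).flatten ++ (post.map Blk.c).flatten)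
      ++ fw.take (fX.length + fY.length) ++ rest := by
    rw [rd_take fdec]; exact hvg
  by_cases hD : b.length + ((pre.map Blk.c).flatten).length
      + ((post.map Blk.c).flatten).length + fX.length + fY.length ≤ x.length
  · -- Case D: rewriting beyond the protected prefix
    have hPx : (b ++ (pre.map Blk.c).flatten ++ (post.map Blk.c).flatten ++ fX ++ fY) <+: x :=
      List.prefix_of_prefix_length_le ⟨rest, hrest⟩ hxv (by simp only [List.length_append]; omega)
    obtain ⟨x2, hx2⟩ := hPx
    have hpres' : (b ++ (pre.map Blk.c).flatten ++ (post.map Blk.c).flatten ++ fX ++ fY) <+: v' :=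
      ⟨x2 ++ β ++ y, by rw [hv', ← hx2]; simp [List.append_assoc]⟩
    obtain ⟨b₁, F₁, hsplit, hmin'⟩ :=
      minC hC hv hv' hβdec hmin fdec hpres' (Or.inl (by omega))
    refine Wit.mk v' b₁ (F₁ ++ pre) post fw fX fY fZ fdec ?_ ?_ htrk hmin'
    · rw [ha, ← hsplit]; simp [List.append_assoc]
    · have hweq : b₁ ++ ((F₁ ++ pre).map Blk.c).flatten ++ (post.map Blk.c).flatten ++ fX ++ fY
          = b ++ (pre.map Blk.c).flatten ++ (post.map Blk.c).flatten ++ fX ++ fY := by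
        rw [← hsplit]; simp [List.append_assoc]
      rw [hweq]
      exact hpres'
  push_neg at hD
  by_cases hE : x.length = b.length + ((pre.map Blk.c).flatten).length
      + ((post.map Blk.c).flatten).length
  · -- Case C1: rewriting exactly at the final occupant: swap
    have hxg : x = b ++ (pre.map Blk.c).flatten ++ (post.map Blk.c).flatten := by
      have e1 : x ++ (α ++ y)
          = (b ++ (pre.map Blk.c).flatten ++ (post.map Blk.c).flatten) ++ ((fX ++ fY) ++ rest) := by
        rw [← List.append_assoc, ← hv, hvg]; simp [List.append_assoc]
      exact pref_eq e1 (by rw [hglen]; omega)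
    have hαfw : α = fw := by
      by_contra hne
      have hvg3 : v = x ++ fw.take (fX.length + fY.length) ++ rest := by rw [hvg2, ← hxg]
      have hb1 : x.length + α.length ≤ x.length + fX.length := by
        have := M1 hC hα (List.prefix_refl α) hv fdec hvg3
          (by omega) (by omega) le_rfl (by omega) (Or.inl hne)
        omega
      have hb2 : x.length + (fX.length + fY.length) ≤ x.length + Xa.length := by
        have hfpref : (fX ++ fY) <+: fw := by
          rw [← rd_take fdec]; exact List.take_prefix _ _
        have hvg4 : v = x ++ (fX ++ fY) ++ rest := by
          rw [hvg, ← hxg]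
        have hvα : v = x ++ α.take α.length ++ y := by rw [List.take_length]; exact hv
        have := M1 hC (rd_mem fdec) hfpref hvg4 hαdec hvα (by omega) le_rfl le_rfl
          (by simp only [List.length_append]; omega) (Or.inl (fun h => hne h.symm))
        simp only [List.length_append] at this
        omega
      omega
    -- build the swapped witness
    have hpres'C : (b ++ (pre.map Blk.c).flatten ++ (post.map Blk.c).flatten ++ Xb ++ Yb)
        <+: v' :=
      ⟨Zb ++ y, by rw [hv', hxg, rd_eq hβdec]; simp [List.append_assoc]⟩
    obtain ⟨b₁, F₁, hsplit, hmin'⟩ :=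
      minC hC hv hv' hβdec hmin hβdec hpres'C (Or.inr (by omega))
    refine Wit.mk v' b₁ (F₁ ++ pre) post β Xb Yb Zb hβdec ?_ ?_ ?_ hmin'
    · rw [ha, ← hsplit]; simp [List.append_assoc]
    · have hweq : b₁ ++ ((F₁ ++ pre).map Blk.c).flatten ++ (post.map Blk.c).flatten ++ Xb ++ Yb
          = b ++ (pre.map Blk.c).flatten ++ (post.map Blk.c).flatten ++ Xb ++ Yb := by
        rw [← hsplit]; simp [List.append_assoc]
      rw [hweq]
      exact hpres'C
    · cases post with
      | nil =>
        simp only [trackWord] at htrk ⊢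
        refine Relation.ReflTransGen.tail htrk ?_
        rw [← hαfw]
        exact hrel
      | cons c t => exact htrk
  · -- Case C2: rewriting strictly inside the final occupant: truncate
    have hxgt : b.length + ((pre.map Blk.c).flatten).length
        + ((post.map Blk.c).flatten).length < x.length := by omega
    have hnotM2 : ¬ (x.length ≤ b.length + ((pre.map Blk.c).flatten).length
        + ((post.map Blk.c).flatten).length + fX.length) := by
      intro hle
      exact M2 hC fdec hvg2 hαdec hv (by omega) (by rw [hglen]; omega)
        (Or.inr (by rw [hglen]; omega))
    push_neg at hnotM2
    obtain ⟨k, hk⟩ : ∃ k, k = x.length - (b.length + ((pre.map Blk.c).flatten).length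
        + ((post.map Blk.c).flatten).length + fX.length) := ⟨_, rfl⟩
    have hkpos : 0 < k := by omega
    have hklt : k < fY.length := by omega
    have hvg5 : v = ((b ++ (pre.map Blk.c).flatten ++ (post.map Blk.c).flatten) ++ fX)
        ++ (fY ++ rest) := by rw [hvg]; simp [List.append_assoc]
    have hxeq : x = ((b ++ (pre.map Blk.c).flatten ++ (post.map Blk.c).flatten) ++ fX)
        ++ fY.take k := by
      have h1 : x = v.take x.length := (take_of_eq (by rw [hv, List.append_assoc])).symm
      rw [h1, hvg5, List.take_append]
      have h2 : ((b ++ (pre.map Blk.c).flatten ++ (post.map Blk.c).flatten) ++ fX).take x.length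
          = (b ++ (pre.map Blk.c).flatten ++ (post.map Blk.c).flatten) ++ fX :=
        List.take_of_length_le (by simp only [List.length_append]; omega)
      have h3 : (fY ++ rest).take
          (x.length - ((b ++ (pre.map Blk.c).flatten ++ (post.map Blk.c).flatten) ++ fX).length)
          = fY.take k := by
        have h4 : x.length
            - ((b ++ (pre.map Blk.c).flatten ++ (post.map Blk.c).flatten) ++ fX).length = k := by
          simp only [List.length_append]; omega
        rw [h4]
        exact List.take_append_of_le_length (by omega)
      rw [h2, h3]
    refine ?_  -- build truncated witness
    have hneY : fY.take k ≠ fY := by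
      intro hEq
      have := congrArg List.length hEq
      rw [List.length_take] at this
      omega
    have hnnY : fY.take k ≠ [] := by
      intro hEq
      have := congrArg List.length hEq
      rw [List.length_take] at this
      simp only [List.length_nil] at this
      omega
    set blk : Blk R := ⟨fw, fX, fY, fZ, fY.take k, fdec, List.take_prefix _ _, hneY, hnnY⟩
      with hblk
    have hblkc : blk.c = fX ++ fY.take k := rfl
    have hpres'T : (b ++ (pre.map Blk.c).flatten ++ ((post ++ [blk]).map Blk.c).flatten
        ++ Xb ++ Yb) <+: v' :=
      ⟨Zb ++ y, by rw [hv', hxeq, rd_eq hβdec]; simp [hblkc, List.append_assoc]⟩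
    have hgeomT : b.length + ((pre.map Blk.c).flatten).length
        + (((post ++ [blk]).map Blk.c).flatten).length = x.length := by
      have : (((post ++ [blk]).map Blk.c).flatten).length
          = ((post.map Blk.c).flatten).length + fX.length + k := by
        simp [hblkc, List.length_append, List.length_take]
        omega
      omega
    obtain ⟨b₁, F₁, hsplit, hmin'⟩ :=
      minC hC hv hv' hβdec hmin hβdec hpres'T (Or.inr hgeomT)
    refine Wit.mk v' b₁ (F₁ ++ pre) (post ++ [blk]) β Xb Yb Zb hβdec ?_ ?_ ?_ hmin'
    · rw [ha, ← hsplit]; simp [List.append_assoc]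
    · have hweq : b₁ ++ ((F₁ ++ pre).map Blk.c).flatten
          ++ ((post ++ [blk]).map Blk.c).flatten ++ Xb ++ Yb
          = b ++ (pre.map Blk.c).flatten ++ ((post ++ [blk]).map Blk.c).flatten ++ Xb ++ Yb := by
        rw [← hsplit]; simp [List.append_assoc]
      rw [hweq]
      exact hpres'T
    · rw [trackWord_append_single]
      exact htrk

end SmallOverlap
namespace SmallOverlap

open List

variable {A : Type*} {R : Set (List A × List A)}

lemma onestep_symm {u v : List A} (h : OneStep R u v) : OneStep R v u := by
  obtain ⟨x, y, p, q, hpq, h1, h2⟩ := h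
  exact ⟨x, y, q, p, hpq.symm, h2, h1⟩

lemma onestep_ctx {u v x y : List A} (h : OneStep R u v) :
    OneStep R (x ++ u ++ y) (x ++ v ++ y) := by
  obtain ⟨x', y', p, q, hpq, h1, h2⟩ := h
  exact ⟨x ++ x', y' ++ y, p, q, hpq, by rw [h1]; simp [List.append_assoc],
    by rw [h2]; simp [List.append_assoc]⟩

lemma cong_chain {w w' : List A} (h : Cong R w w') :
    Relation.ReflTransGen (OneStep R) w w' := by
  apply h
  · refine ⟨⟨fun _ => .refl, ?_, fun h1 h2 => h1.trans h2⟩, ?_⟩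
    · intro u v huv
      exact (haveI : Std.Symm (OneStep R) := ⟨fun a b hab => onestep_symm hab⟩
          Relation.ReflTransGen.symmetric (r := OneStep R)).symm _ _ huv
    · intro u v xx yy huv
      induction huv with
      | refl => exact .refl
      | tail _ h2 ih => exact ih.tail (onestep_ctx h2)
  · intro pq hpq
    exact Relation.ReflTransGen.single ⟨[], [], pq.1, pq.2, Or.inl hpq, by simp, by simp⟩

lemma ochain_relxy {r X Y : List A} (h : OChain R r X Y) : RelXY R X Y := by
  induction h with
  | base X Y h => exact h
  | step X Y Y' r Xl Yl hxy hpref hne hnnil hch ih => exact ih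

lemma ochain_blocks {r X Y : List A} (h : OChain R r X Y) :
    ∃ l : List (Blk R), (l.map Blk.c).flatten = r := by
  induction h with
  | base X Y h => exact ⟨[], by simp⟩
  | step X Y Y' r Xl Yl hxy hpref hne hnnil hch ih =>
    obtain ⟨u', Z', hdec⟩ := hxy
    obtain ⟨l, hl⟩ := ih
    exact ⟨⟨u', X, Y, Z', Y', hdec, hpref, hne, hnnil⟩ :: l,
      by simp [Blk.c, hl, List.append_assoc]⟩

lemma chain_wit (hC : SatisfiesC R 4) {u₀ a v v' : List A} (hw : Wit R u₀ a v)
    (hch : Relation.ReflTransGen (OneStep R) v v') : Wit R u₀ a v' := by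
  induction hch with
  | refl => exact hw
  | tail _ h2 ih => exact step hC ih h2

end SmallOverlap

/-- if `w` has clean overlap prefix `aXY` and a piece `p` is a possible but
not actual prefix of `w`, then `p` is a prefix of `a·X̄` for some complement `X̄Ȳ Z̄` of
`XYZ` with `X̄ ≠ X` or `Ȳ ≠ Y`; in particular `|p| ≤ |a| + |X̄|`. -/
theorem possible_prefix_of_complement (R : Set (List A × List A)) (hC : SatisfiesC R 4)
    (w a X Y p : List A)
    (hcop : IsCleanOverlapPrefix R w a X Y)
    (hp : IsPiece R p)
    (hpos : ∃ w', Cong R w w' ∧ p <+: w')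
    (hnot : ¬ p <+: w) :
    ∃ u Z ub Xb Yb Zb : List A, RelDecomp R u X Y Z ∧ ComplRel R u ub ∧
      RelDecomp R ub Xb Yb Zb ∧ (Xb ≠ X ∨ Yb ≠ Y) ∧
      p <+: (a ++ Xb) ∧ p.length ≤ a.length + Xb.length := by
  classical
  open SmallOverlap in
  obtain ⟨⟨b0, r0, hab0, hop⟩, hclean⟩ := hcop
  obtain ⟨hchain, hpref0, hminneg⟩ := hop
  obtain ⟨u, Z, hudec⟩ := SmallOverlap.ochain_relxy hchain
  obtain ⟨pre0, hpre0⟩ := SmallOverlap.ochain_blocks hchain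
  have haX : (a ++ X) <+: w := by
    refine List.IsPrefix.trans ?_ hpref0
    exact ⟨Y, by rw [hab0]⟩
  have hwit : SmallOverlap.Wit R u a w := by
    refine SmallOverlap.Wit.mk w b0 pre0 [] u X Y Z hudec ?_ ?_ ?_ ?_
    · rw [hab0, hpre0]
    · have hweq : b0 ++ (pre0.map SmallOverlap.Blk.c).flatten
          ++ (([] : List (SmallOverlap.Blk R)).map SmallOverlap.Blk.c).flatten ++ X ++ Y
          = b0 ++ r0 ++ X ++ Y := by
        rw [hpre0]; simp
      rw [hweq]
      exact hpref0
    · exact Relation.ReflTransGen.refl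
    · intro c X₀ Y₀ hxy hocc
      by_contra hlt
      push_neg at hlt
      exact hminneg ⟨c, X₀, Y₀, hxy, hlt, hocc⟩
  obtain ⟨w', hcong, hpw'⟩ := hpos
  have hwit' : SmallOverlap.Wit R u a w' :=
    SmallOverlap.chain_wit hC hwit (SmallOverlap.cong_chain hcong)
  obtain ⟨b', pre', post', fw', fX', fY', fZ', fdec', ha', hpres', htrk', hmin'⟩ := hwit'
  have hT : ∃ tw tX tY tZ δ : List A, RelDecomp R tw tX tY tZ ∧ ComplRel R u tw ∧
      δ <+: tY ∧ δ ≠ [] ∧ (a ++ tX ++ δ) <+: w' := by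
    cases post' with
    | nil =>
      refine ⟨fw', fX', fY', fZ', fY', fdec', htrk', List.prefix_refl _,
        SmallOverlap.rd_Y_ne_nil hC fdec', ?_⟩
      have hweq : b' ++ (pre'.map SmallOverlap.Blk.c).flatten
          ++ (([] : List (SmallOverlap.Blk R)).map SmallOverlap.Blk.c).flatten ++ fX' ++ fY'
          = a ++ fX' ++ fY' := by
        rw [ha']; simp [List.append_assoc]
      rw [← hweq]
      exact hpres'
    | cons cb tb =>
      have h1 : (a ++ cb.X ++ cb.pf) <+: (b' ++ (pre'.map SmallOverlap.Blk.c).flatten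
          ++ ((cb :: tb).map SmallOverlap.Blk.c).flatten ++ fX' ++ fY') := by
        refine ⟨(tb.map SmallOverlap.Blk.c).flatten ++ fX' ++ fY', ?_⟩
        rw [ha']; simp [SmallOverlap.Blk.c, List.append_assoc]
      exact ⟨cb.w, cb.X, cb.Y, cb.Z, cb.pf, cb.dec, htrk', cb.hpref, cb.hnnil,
        h1.trans hpres'⟩
  obtain ⟨tw, tX, tY, tZ, δ, tdec, htrkc, hδpref, hδnnil, hTpres⟩ := hT
  have hδpos : 0 < δ.length := List.length_pos_iff.mpr hδnnil
  have haXt : (a ++ tX) <+: w' := by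
    refine List.IsPrefix.trans ?_ hTpres
    exact ⟨δ, rfl⟩
  have hplen : p.length ≤ a.length + tX.length := by
    by_contra hgt
    push_neg at hgt
    obtain ⟨k, hk⟩ : ∃ k, k = min (p.length - a.length) (tX.length + δ.length) := ⟨_, rfl⟩
    have hkX : tX.length < k := by omega
    have hk2 : k ≤ tX.length + δ.length := by omega
    have hka : a.length + k ≤ p.length := by omega
    have hχpref : (a ++ (tX ++ δ).take k) <+: w' := by
      have e : (a ++ (tX ++ δ)).take (a.length + k) = a ++ (tX ++ δ).take k := by
        rw [List.take_append, List.take_of_length_le (l := a) (by omega)]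
        have e1 : a.length + k - a.length = k := by omega
        rw [e1]
      rw [← e]
      refine (List.take_prefix _ _).trans ?_
      have e2 : a ++ (tX ++ δ) = a ++ tX ++ δ := by simp [List.append_assoc]
      rw [e2]; exact hTpres
    have hχp : (a ++ (tX ++ δ).take k) <+: p :=
      List.prefix_of_prefix_length_le hχpref hpw'
        (by simp only [List.length_append, List.length_take]; omega)
    obtain ⟨t, ht⟩ := hχp
    have hχpiece : IsPiece R ((tX ++ δ).take k) :=
      SmallOverlap.piece_infix hp ⟨a, t, ht⟩
    have hχtw : (tX ++ δ).take k <+: tw := by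
      refine (List.take_prefix _ _).trans ?_
      obtain ⟨tt, htt⟩ := hδpref
      refine ⟨tt ++ tZ, ?_⟩
      rw [SmallOverlap.rd_eq tdec, ← htt]
      simp [List.append_assoc]
    have := SmallOverlap.rd_prefix_piece_le tdec hχtw hχpiece
    simp only [List.length_take, List.length_append] at this
    omega
  have hpax : p <+: (a ++ tX) :=
    List.prefix_of_prefix_length_le hpw' haXt (by simp only [List.length_append]; omega)
  refine ⟨u, Z, tw, tX, tY, tZ, hudec, htrkc, tdec, ?_, hpax,
    by simpa only [List.length_append] using hpax.length_le⟩
  by_cases hXX : tX = X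
  · by_cases hYY : tY = Y
    · exfalso
      apply hnot
      exact (hXX ▸ hpax).trans haX
    · exact Or.inr hYY
  · exact Or.inl hXX
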